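/- Let (Y, V, v⁰; σ, τ) be an indecomposable distinguished triple with Y nilpotent and of distinguished height h, and suppose there is a special vector w ∈ V with Y^h w = v⁰ and τ(w, v⁰) ≠ 0 (i.e. the parameter set contains a nonzero element). Then {w, Yw, Y²w, …, Y^h w} is a basis of V; in particular dim V = h + 1, dim ker Y = 1, and V is cyclic for Y with cyclic vector w. -/

import Mathlib

/-- A vector `w` is *special* for the antilinear map `σ`:  it is nonzero and an
eigenvector of `σ` with eigenvalue `±1` when `σ ∘ σ = id`, resp. `±i` when
`σ ∘ σ = -id`. -/
def IsSpecial {V : Type*} [AddCommGroup V] [Module ℂ V] (σ : V → V) (w : V) : Prop :=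
  w ≠ 0 ∧
    ((∀ v : V, σ (σ v) = v) → (σ w = w ∨ σ w = -w)) ∧
    ((∀ v : V, σ (σ v) = -v) → (σ w = Complex.I • w ∨ σ w = -(Complex.I • w)))

/-- Proposition 3.1, Case 1: if an indecomposable nilpotent distinguished
triple of distinguished height `h` has a special vector `w` with `Y^h w = v⁰` and
`τ(w, v⁰) ≠ 0`, then `w, Yw, …, Y^h w` is a basis of `V`; in particular
`dim V = h + 1` and `dim ker Y = 1`. -/
theorem single_jordan_block_of_nonzero_parameter
    {V : Type*} [AddCommGroup V] [Module ℂ V] [FiniteDimensional ℂ V]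
    (σ : V → V) (Y : Module.End ℂ V) (τ : V →ₗ[ℂ] V →ₗ[ℂ] ℂ) (v0 : V)
    (hσadd : ∀ u v : V, σ (u + v) = σ u + σ v)
    (hσsmul : ∀ (a : ℂ) (v : V), σ (a • v) = (starRingEnd ℂ) a • σ v)
    (hσbij : Function.Bijective σ)
    (hσinv : (∀ v : V, σ (σ v) = v) ∨ (∀ v : V, σ (σ v) = -v))
    (hτl : ∀ u : V, (∀ v : V, τ u v = 0) → u = 0)
    (hτr : ∀ v : V, (∀ u : V, τ u v = 0) → v = 0)
    (hτsa : (∀ u v : V, τ u v = τ v u) ∨ (∀ u v : V, τ u v = -(τ v u)))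
    (hτσ : ∀ u v : V, τ (σ u) (σ v) = (starRingEnd ℂ) (τ u v))
    (hYσ : ∀ v : V, Y (σ v) = σ (Y v))
    (hskew : ∀ u v : V, τ (Y u) v + τ u (Y v) = 0)
    (hv0 : IsSpecial σ v0) (hτv0 : τ v0 v0 = 0) (hYv0 : Y v0 = 0)
    (hnil : IsNilpotent Y)
    (hindec : ∀ W : Submodule ℂ V,
      (∀ w ∈ W, Y w ∈ W) → (∀ w ∈ W, σ w ∈ W) → v0 ∈ W →
      (∀ u ∈ W, (∀ v ∈ W, τ u v = 0) → u = 0) →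
      (∀ v ∈ W, (∀ u ∈ W, τ u v = 0) → v = 0) → W = ⊤)
    (h : ℕ) (w : V)
    (hw : IsSpecial σ w) (hwh : (Y ^ h) w = v0) (hwτ : τ w v0 ≠ 0) :
    LinearIndependent ℂ (fun i : Fin (h + 1) => (Y ^ (i : ℕ)) w) ∧
      Submodule.span ℂ (Set.range fun i : Fin (h + 1) => (Y ^ (i : ℕ)) w) = ⊤ ∧
      Module.finrank ℂ V = h + 1 ∧
      Module.finrank ℂ (LinearMap.ker Y) = 1 := by
  classical
  set f : Fin (h + 1) → V := fun i : Fin (h + 1) => (Y ^ (i : ℕ)) w with hf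
  -- Y^{a+1} v = Y (Y^a v)
  have hpow1 : ∀ (a : ℕ) (v : V), (Y ^ (a + 1)) v = Y ((Y ^ a) v) := by
    intro a v
    rw [pow_succ']
    rfl
  -- Y^m w = 0 for m > h
  have hhigh : ∀ m : ℕ, h < m → (Y ^ m) w = 0 := by
    intro m hm
    obtain ⟨k, rfl⟩ : ∃ k, m = k + (h + 1) := ⟨m - (h + 1), by omega⟩
    have h1 : (Y ^ (h + 1)) w = 0 := by rw [hpow1, hwh, hYv0]
    rw [pow_add, Module.End.mul_apply, h1, map_zero]
  have hskew' : ∀ u v : V, τ (Y u) v = -(τ u (Y v)) := fun u v =>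
    eq_neg_of_add_eq_zero_left (hskew u v)
  -- moving powers of Y across τ
  have hpowτ : ∀ (a : ℕ) (u v : V), τ ((Y ^ a) u) v = (-1 : ℂ) ^ a * τ u ((Y ^ a) v) := by
    intro a
    induction a with
    | zero => intro u v; simp
    | succ n IH =>
      intro u v
      have h1 : (Y ^ (n + 1)) u = (Y ^ n) (Y u) := by rw [pow_succ]; rfl
      rw [h1, IH (Y u) v, hskew' u ((Y ^ n) v), ← hpow1]
      ring
  -- Gram matrix entries
  have gram : ∀ a b : ℕ, τ ((Y ^ a) w) ((Y ^ b) w) = (-1 : ℂ) ^ a * τ w ((Y ^ (a + b)) w) := by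
    intro a b
    rw [hpowτ a w ((Y ^ b) w)]
    congr 2
    rw [pow_add]
    rfl
  have gram_zero : ∀ a b : ℕ, h < a + b → τ ((Y ^ a) w) ((Y ^ b) w) = 0 := by
    intro a b hab
    rw [gram, hhigh _ hab, map_zero, mul_zero]
  have gram_diag : ∀ a b : ℕ, a + b = h → τ ((Y ^ a) w) ((Y ^ b) w) = (-1 : ℂ) ^ a * τ w v0 := by
    intro a b hab
    rw [gram, hab, hwh]
  -- key coefficient-extraction lemma
  have keyD : ∀ c : Fin (h + 1) → ℂ,
      (∀ j : Fin (h + 1), τ (∑ i, c i • f i) (f j) = 0) → ∀ i, c i = 0 := by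
    intro c hc
    have main : ∀ n : ℕ, ∀ i : Fin (h + 1), (i : ℕ) = n → c i = 0 := by
      intro n
      induction n using Nat.strong_induction_on with
      | _ n IH =>
        intro i hi
        have hn : n ≤ h := by have := i.isLt; omega
        have hj : h - n < h + 1 := by omega
        have hcj := hc ⟨h - n, hj⟩
        simp only [hf, map_sum, map_smul, LinearMap.sum_apply, LinearMap.smul_apply,
          smul_eq_mul] at hcj
        rw [Finset.sum_eq_single i] at hcj
        · rw [hi] at hcj
          have hd : τ ((Y ^ n) w) ((Y ^ (h - n)) w) = (-1 : ℂ) ^ n * τ w v0 :=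
            gram_diag n (h - n) (by omega)
          rw [hd] at hcj
          rcases mul_eq_zero.1 hcj with h0 | h0
          · exact h0
          · rcases mul_eq_zero.1 h0 with h1 | h1
            · exact absurd h1 (pow_ne_zero n (by norm_num))
            · exact absurd h1 hwτ
        · intro b _ hbi
          rcases lt_trichotomy (b : ℕ) n with hb | hb | hb
          · rw [IH (b : ℕ) (by omega) b rfl, zero_mul]
          · exact absurd (Fin.ext (by omega)) hbi
          · rw [gram_zero (b : ℕ) (h - n) (by omega), mul_zero]
        · intro hni; exact absurd (Finset.mem_univ i) hni
    intro i; exact main (i : ℕ) i rfl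
  -- linear independence
  have hindep : LinearIndependent ℂ f := by
    rw [Fintype.linearIndependent_iff]
    intro c hc
    apply keyD c
    intro j
    rw [hc]
    simp
  -- the span is σ-stable, Y-stable etc.
  set W : Submodule ℂ V := Submodule.span ℂ (Set.range f) with hW
  have hmemf : ∀ i : Fin (h + 1), f i ∈ W := fun i =>
    Submodule.subset_span (Set.mem_range_self i)
  have hσ0 : σ 0 = 0 := by
    have := hσsmul 0 w
    simpa using this
  have hlam : ∃ l : ℂ, σ w = l • w := by
    rcases hσinv with h1 | h2
    · rcases hw.2.1 h1 with e | e
      · exact ⟨1, by simpa using e⟩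
      · exact ⟨-1, by simpa [neg_smul] using e⟩
    · rcases hw.2.2 h2 with e | e
      · exact ⟨Complex.I, e⟩
      · exact ⟨-Complex.I, by simpa [neg_smul] using e⟩
  obtain ⟨l, hl⟩ := hlam
  have hσpow : ∀ (a : ℕ) (v : V), (Y ^ a) (σ v) = σ ((Y ^ a) v) := by
    intro a
    induction a with
    | zero => intro v; rfl
    | succ n IH => intro v; rw [hpow1, hpow1, IH, hYσ]
  have hσf : ∀ i : Fin (h + 1), σ (f i) ∈ W := by
    intro i
    have : σ (f i) = l • f i := by
      rw [hf]
      simp only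
      rw [← hσpow, hl, map_smul]
    rw [this]
    exact W.smul_mem _ (hmemf i)
  have hYW : ∀ u ∈ W, Y u ∈ W := by
    intro u hu
    induction hu using Submodule.span_induction with
    | mem x hx =>
      obtain ⟨i, rfl⟩ := hx
      by_cases hi : (i : ℕ) < h
      · have : Y (f i) = f ⟨(i : ℕ) + 1, by omega⟩ := by
          simp only [hf, ← hpow1]
        rw [this]; exact hmemf _
      · have hih : (i : ℕ) = h := by have := i.isLt; omega
        have : Y (f i) = 0 := by
          simp only [hf, hih, ← hpow1]
          exact hhigh _ (by omega)
        rw [this]; exact W.zero_mem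
    | zero => simpa using W.zero_mem
    | add x y hx hy ihx ihy => rw [map_add]; exact W.add_mem ihx ihy
    | smul a x hx ihx => rw [map_smul]; exact W.smul_mem a ihx
  have hσW : ∀ u ∈ W, σ u ∈ W := by
    intro u hu
    induction hu using Submodule.span_induction with
    | mem x hx =>
      obtain ⟨i, rfl⟩ := hx
      exact hσf i
    | zero => rw [hσ0]; exact W.zero_mem
    | add x y hx hy ihx ihy => rw [hσadd]; exact W.add_mem ihx ihy
    | smul a x hx ihx => rw [hσsmul]; exact W.smul_mem _ ihx
  have hv0W : v0 ∈ W := by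
    have : f (Fin.last h) = v0 := by simp [hf, hwh]
    rw [← this]; exact hmemf _
  have hWl : ∀ u ∈ W, (∀ v ∈ W, τ u v = 0) → u = 0 := by
    intro u hu hv
    rw [hW] at hu
    obtain ⟨c, rfl⟩ := (Submodule.mem_span_range_iff_exists_fun ℂ).1 hu
    have hc : ∀ j : Fin (h + 1), τ (∑ i, c i • f i) (f j) = 0 := fun j =>
      hv (f j) (hmemf j)
    have := keyD c hc
    simp [this]
  have hWr : ∀ v ∈ W, (∀ u ∈ W, τ u v = 0) → v = 0 := by
    intro v hv hu
    refine hWl v hv ?_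
    intro x hx
    rcases hτsa with hs | hs
    · rw [hs]; exact hu x hx
    · rw [hs, hu x hx, neg_zero]
  have hWtop : W = ⊤ := hindec W hYW hσW hv0W hWl hWr
  refine ⟨hindep, hWtop, ?_, ?_⟩
  · -- finrank V = h + 1
    have b : Module.Basis (Fin (h + 1)) ℂ V := Module.Basis.mk hindep (by rw [← hW, hWtop])
    rw [Module.finrank_eq_card_basis b, Fintype.card_fin]
  · -- finrank ker Y = 1
    have hrank : Module.finrank ℂ V = h + 1 := by
      have b : Module.Basis (Fin (h + 1)) ℂ V := Module.Basis.mk hindep (by rw [← hW, hWtop])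
      rw [Module.finrank_eq_card_basis b, Fintype.card_fin]
    set g : Fin h → V := fun j => (Y ^ ((j : ℕ) + 1)) w with hg
    have hgindep : LinearIndependent ℂ g := by
      have : g = f ∘ Fin.succ := by
        funext j
        simp [hg, hf, Fin.val_succ]
      rw [this]
      exact hindep.comp Fin.succ (Fin.succ_injective h)
    have hrange : LinearMap.range Y = Submodule.span ℂ (Set.range g) := by
      rw [LinearMap.range_eq_map, ← hWtop, hW, Submodule.map_span]
      apply le_antisymm
      · rw [Submodule.span_le]
        rintro x ⟨y, ⟨i, rfl⟩, rfl⟩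
        by_cases hi : (i : ℕ) < h
        · have : Y (f i) = g ⟨(i : ℕ), hi⟩ := by
            simp only [hf, hg, ← hpow1]
          rw [this]
          exact Submodule.subset_span (Set.mem_range_self _)
        · have hih : (i : ℕ) = h := by have := i.isLt; omega
          have : Y (f i) = 0 := by
            simp only [hf, hih, ← hpow1]
            exact hhigh _ (by omega)
          rw [this]
          exact Submodule.zero_mem _
      · rw [Submodule.span_le]
        rintro x ⟨j, rfl⟩
        have : g j = Y (f ⟨(j : ℕ), by omega⟩) := by
          simp only [hf, hg, ← hpow1]
        rw [this]
        exact Submodule.subset_span ⟨f ⟨(j : ℕ), by omega⟩, Set.mem_range_self _, rfl⟩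
    have hrg : Module.finrank ℂ (LinearMap.range Y) = h := by
      rw [hrange, finrank_span_eq_card hgindep, Fintype.card_fin]
    have := LinearMap.finrank_range_add_finrank_ker Y
    rw [hrg, hrank] at this
    omega
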